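/- Let K be a Galois number field of degree k ≥ 3 with incomplete norm form f. There is a constant C = C(K) such that for every nonzero integral ideal 𝔫 of O_K, ρ(𝔫) ≤ C · (N𝔫)^{1/k}. -/

import Mathlib

open NumberField

noncomputable section

/-- ρ(𝔫) = (N𝔫)^{-(k-2)} #{x mod N𝔫 : 𝔫 ∣ (x)}. -/
def rhoIdeal (K : Type) [Field K] [NumberField K] (k : ℕ)
    (ω : Module.Basis (Fin k) ℤ (𝓞 K)) (𝔫 : Ideal (𝓞 K)) : ℝ :=
  (Nat.card {x : Fin (k-1) → ZMod (Ideal.absNorm 𝔫) //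
      (∑ i : Fin (k-1), ((x i).val : ℤ) • ω (Fin.castLE (Nat.sub_le k 1) i)) ∈ 𝔫} : ℝ)
    / (Ideal.absNorm 𝔫 : ℝ) ^ (k - 2)

set_option maxHeartbeats 2000000 in
set_option synthInstance.maxHeartbeats 400000 in
/-- ρ(𝔫) ≤ C (N𝔫)^{1/k}. -/
theorem rhoIdeal_le
    (K : Type) [Field K] [NumberField K] [IsGalois ℚ K] (k : ℕ) (hk : 3 ≤ k)
    (hdeg : Module.finrank ℚ K = k)
    (ω : Module.Basis (Fin k) ℤ (𝓞 K)) (hω1 : ω ⟨0, by omega⟩ = 1) :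
    ∃ C : ℝ, 0 < C ∧ ∀ 𝔫 : Ideal (𝓞 K), 𝔫 ≠ 0 →
      rhoIdeal K k ω 𝔫 ≤ C * (Ideal.absNorm 𝔫 : ℝ) ^ (1 / (k : ℝ)) := by
  classical
  have hk21 : k - 1 = (k-2)+1 := by omega
  have hk1 : 1 ≤ k := by omega
  have hk3 : (3:ℝ) ≤ (k:ℝ) := by exact_mod_cast hk
  have hkR : (0:ℝ) < (k : ℝ) := by linarith
  set ι : Fin (k-1) → Fin k := Fin.castLE (Nat.sub_le k 1) with hιdef
  have hι : Function.Injective ι := Fin.castLE_injective _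
  -- bound on the entries of left multiplication matrices
  set B0 : ℕ := Finset.univ.sup (fun p : Fin (k-1) × Fin k × Fin k =>
    (Algebra.leftMulMatrix ω (ω (ι p.1)) p.2.1 p.2.2).natAbs) with hB0def
  have hB0 : ∀ (c : Fin (k-1)) (i j : Fin k),
      |Algebra.leftMulMatrix ω (ω (ι c)) i j| ≤ (B0 : ℤ) := by
    intro c i j
    rw [Int.abs_eq_natAbs]
    exact_mod_cast Finset.le_sup (f := fun p : Fin (k-1) × Fin k × Fin k =>
      (Algebra.leftMulMatrix ω (ω (ι p.1)) p.2.1 p.2.2).natAbs)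
      (Finset.mem_univ (c, i, j))
  set E : ℝ := (Nat.factorial k : ℝ) * ((k * (B0 + 1) : ℕ) : ℝ) ^ k with hEdef
  have hE0 : 0 < E := by
    apply mul_pos
    · exact_mod_cast Nat.factorial_pos k
    · have : 0 < k * (B0 + 1) := by positivity
      positivity
  set D : ℝ := (E + 1) ^ (1 / (k:ℝ)) with hDdef
  have hD1 : 1 < D := by
    rw [hDdef]
    apply Real.one_lt_rpow_iff_of_pos (by linarith) |>.mpr
    exact Or.inl ⟨by linarith, by positivity⟩
  have hD0 : 0 < D := lt_trans one_pos hD1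
  have hDk : D ^ k = E + 1 := by
    rw [hDdef, ← Real.rpow_natCast ((E+1) ^ (1/(k:ℝ))) k, ← Real.rpow_mul (by linarith),
      one_div_mul_cancel (ne_of_gt hkR), Real.rpow_one]
  refine ⟨D ^ (k-1), pow_pos hD0 _, fun 𝔫 h𝔫 => ?_⟩
  set N : ℕ := Ideal.absNorm 𝔫 with hNdef
  have hN0 : N ≠ 0 := by
    rw [hNdef, Ne, Ideal.absNorm_eq_zero_iff]
    rwa [← Submodule.zero_eq_bot]
  haveI : NeZero N := ⟨hN0⟩
  have hN1 : (1:ℝ) ≤ (N:ℝ) := by exact_mod_cast Nat.one_le_iff_ne_zero.mpr hN0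
  have hNR : (0:ℝ) < (N:ℝ) := by linarith
  -- the additive map ψ
  have hmemN : ((N : ℤ) : 𝓞 K) ∈ 𝔫 := by exact_mod_cast Ideal.absNorm_mem 𝔫
  have hg : ∀ i : Fin (k-1),
      ((Ideal.Quotient.mk 𝔫).toAddMonoidHom.comp (zmultiplesHom (𝓞 K) (ω (ι i))))
        ((N : ℕ) : ℤ) = 0 := by
    intro i
    simp only [AddMonoidHom.coe_comp, Function.comp_apply, zmultiplesHom_apply,
      RingHom.toAddMonoidHom_eq_coe, AddMonoidHom.coe_coe]
    rw [Ideal.Quotient.eq_zero_iff_mem, zsmul_eq_mul]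
    exact Ideal.mul_mem_right _ _ hmemN
  set f : Fin (k-1) → (ZMod N →+ (𝓞 K ⧸ 𝔫)) := fun i =>
    ZMod.lift N ⟨(Ideal.Quotient.mk 𝔫).toAddMonoidHom.comp (zmultiplesHom (𝓞 K) (ω (ι i))),
      hg i⟩ with hfdef
  set ψ : (Fin (k-1) → ZMod N) →+ (𝓞 K ⧸ 𝔫) :=
    { toFun := fun x => ∑ i, f i (x i)
      map_zero' := by simp
      map_add' := fun x y => by
        simp only [Pi.add_apply, map_add]
        rw [Finset.sum_add_distrib] } with hψdef
  have hψ : ∀ x : Fin (k-1) → ZMod N,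
      ψ x = Ideal.Quotient.mk 𝔫 (∑ i, ((x i).val : ℤ) • ω (ι i)) := by
    intro x
    rw [map_sum]
    show ∑ i, f i (x i) = _
    refine Finset.sum_congr rfl fun i _ => ?_
    have hx : x i = (((x i).val : ℤ) : ZMod N) := by
      push_cast
      exact (ZMod.natCast_rightInverse (x i)).symm
    show f i (x i) = _
    conv_lhs => rw [hx]
    rw [hfdef, ZMod.lift_coe]
    simp [zmultiplesHom_apply]
  -- cardinality identity
  have hcards : N ^ (k-1) = Nat.card ψ.range * Nat.card ψ.ker := by
    have h1 : Nat.card (Fin (k-1) → ZMod N) = N ^ (k-1) := by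
      simp [Nat.card_eq_fintype_card, ZMod.card]
    rw [← h1, AddSubgroup.card_eq_card_quotient_mul_card_addSubgroup ψ.ker]
    congr 1
    exact Nat.card_congr (QuotientAddGroup.quotientKerEquivRange ψ).toEquiv
  have hker : Nat.card {x : Fin (k-1) → ZMod N //
      (∑ i : Fin (k-1), ((x i).val : ℤ) • ω (ι i)) ∈ 𝔫} = Nat.card ψ.ker := by
    apply Nat.card_congr
    exact Equiv.subtypeEquivRight fun x => by
      rw [AddMonoidHom.mem_ker, hψ, Ideal.Quotient.eq_zero_iff_mem]
  -- the box parameter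
  set T : ℕ := ⌊(N:ℝ) ^ (1/(k:ℝ)) / D⌋₊ with hTdef
  have hNk0 : (0:ℝ) < (N:ℝ) ^ (1/(k:ℝ)) := Real.rpow_pos_of_pos hNR _
  have hTle : (T:ℝ) ≤ (N:ℝ) ^ (1/(k:ℝ)) / D := Nat.floor_le (by positivity)
  have hTlt : (N:ℝ) ^ (1/(k:ℝ)) / D < (T:ℝ) + 1 := Nat.lt_floor_add_one _
  have hTN : T < N := by
    have h2 : (N:ℝ) ^ (1/(k:ℝ)) ≤ (N:ℝ) := by
      nth_rewrite 2 [← Real.rpow_one (N:ℝ)]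
      apply Real.rpow_le_rpow_of_exponent_le hN1
      rw [div_le_one hkR]
      linarith
    have : (T:ℝ) < (N:ℝ) := by
      calc (T:ℝ) ≤ (N:ℝ) ^ (1/(k:ℝ)) / D := hTle
        _ < (N:ℝ) ^ (1/(k:ℝ)) := div_lt_self hNk0 hD1
        _ ≤ (N:ℝ) := h2
    exact_mod_cast this
  -- injectivity of the box map
  have hbox : ∀ v w : Fin (k-1) → Fin (T+1),
      ψ (fun i => ((v i : ℕ) : ZMod N)) = ψ (fun i => ((w i : ℕ) : ZMod N)) → v = w := by
    intro v w hvw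
    have hvlt : ∀ i, (v i : ℕ) ≤ T := fun i => Nat.lt_succ_iff.mp (v i).isLt
    have hwlt : ∀ i, (w i : ℕ) ≤ T := fun i => Nat.lt_succ_iff.mp (w i).isLt
    have hvalv : ∀ i, (((v i : ℕ) : ZMod N)).val = (v i : ℕ) :=
      fun i => ZMod.val_cast_of_lt (lt_of_le_of_lt (hvlt i) hTN)
    have hvalw : ∀ i, (((w i : ℕ) : ZMod N)).val = (w i : ℕ) :=
      fun i => ZMod.val_cast_of_lt (lt_of_le_of_lt (hwlt i) hTN)
    set d : Fin (k-1) → ℤ := fun i => ((v i : ℕ) : ℤ) - ((w i : ℕ) : ℤ) with hddef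
    have hmem : (∑ i, d i • ω (ι i)) ∈ 𝔫 := by
      rw [hψ, hψ] at hvw
      have h1 := Ideal.Quotient.eq.mp hvw
      simp only [hvalv, hvalw] at h1
      have h2 : ∑ i, (((v i : ℕ) : ℤ)) • ω (ι i) - ∑ i, (((w i : ℕ) : ℤ)) • ω (ι i)
          = ∑ i, d i • ω (ι i) := by
        rw [← Finset.sum_sub_distrib]
        exact Finset.sum_congr rfl fun i _ => by rw [hddef, sub_smul]
      rwa [h2] at h1
    have hd0 : ∀ i, d i = 0 := by
      by_contra hcon
      push_neg at hcon
      obtain ⟨i0, hi0⟩ := hcon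
      have hα : (∑ i, d i • ω (ι i)) ≠ 0 := by
        intro h0
        exact hi0 (Fintype.linearIndependent_iff.mp (ω.linearIndependent.comp ι hι) d h0 i0)
      set α := ∑ i, d i • ω (ι i) with hαdef
      have hnormdvd : (N:ℤ) ∣ Algebra.norm ℤ α := Ideal.absNorm_dvd_norm_of_mem hmem
      have hnorm0 : Algebra.norm ℤ α ≠ 0 := (Algebra.norm_ne_zero_iff_of_basis ω).mpr hα
      have hle : (N:ℤ) ≤ |Algebra.norm ℤ α| :=
        Int.le_of_dvd (abs_pos.mpr hnorm0) ((dvd_abs _ _).mpr hnormdvd)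
      have hdabs : ∀ i, |d i| ≤ (T:ℤ) := by
        intro i
        have hv : ((v i : ℕ) : ℤ) ≤ (T:ℤ) := by exact_mod_cast hvlt i
        have hw : ((w i : ℕ) : ℤ) ≤ (T:ℤ) := by exact_mod_cast hwlt i
        have hv0 : (0:ℤ) ≤ ((v i : ℕ) : ℤ) := Int.ofNat_nonneg _
        have hw0 : (0:ℤ) ≤ ((w i : ℕ) : ℤ) := Int.ofNat_nonneg _
        simp only [hddef]
        rw [abs_le]
        constructor <;> linarith
      have hmat : Algebra.leftMulMatrix ω α = ∑ i, d i • Algebra.leftMulMatrix ω (ω (ι i)) := by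
        rw [hαdef, map_sum]
        exact Finset.sum_congr rfl fun i _ => map_zsmul _ _ _
      have hcoef : ((k-1 : ℕ):ℤ) * ((T:ℤ) * (B0:ℤ)) ≤ ((k * (B0+1) : ℕ):ℤ) * (T:ℤ) := by
        have hnat : (k-1) * (T * B0) ≤ (k * (B0+1)) * T := by
          calc (k-1) * (T * B0) ≤ k * (T * B0) := Nat.mul_le_mul_right _ (Nat.sub_le _ _)
            _ ≤ k * (T * (B0+1)) := Nat.mul_le_mul_left _ (Nat.mul_le_mul_left _ (Nat.le_succ _))
            _ = (k * (B0+1)) * T := by ring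
        exact_mod_cast hnat
      have hentry : ∀ a b : Fin k,
          |Algebra.leftMulMatrix ω α a b| ≤ ((k * (B0+1) : ℕ):ℤ) * (T:ℤ) := by
        intro a b
        rw [hmat]
        calc |(∑ i, d i • Algebra.leftMulMatrix ω (ω (ι i))) a b|
            = |∑ i, d i * Algebra.leftMulMatrix ω (ω (ι i)) a b| := by
              simp only [Matrix.sum_apply, Matrix.smul_apply, smul_eq_mul]
          _ ≤ ∑ i, |d i * Algebra.leftMulMatrix ω (ω (ι i)) a b| :=
              Finset.abs_sum_le_sum_abs _ _
          _ ≤ ∑ _i : Fin (k-1), (T:ℤ) * (B0:ℤ) := by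
              refine Finset.sum_le_sum fun i _ => ?_
              rw [abs_mul]
              exact mul_le_mul (hdabs i) (hB0 i a b) (abs_nonneg _)
                (Int.ofNat_nonneg T)
          _ = ((k-1 : ℕ):ℤ) * ((T:ℤ) * (B0:ℤ)) := by
              rw [Finset.sum_const, Finset.card_univ, Fintype.card_fin, nsmul_eq_mul]
          _ ≤ ((k * (B0+1) : ℕ):ℤ) * (T:ℤ) := hcoef
      have hdet : |Algebra.norm ℤ α| ≤ (Nat.factorial k : ℤ) * (((k * (B0+1) : ℕ):ℤ) * (T:ℤ)) ^ k := by
        rw [Algebra.norm_eq_matrix_det ω]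
        have hentry' : ∀ a b : Fin k,
            AbsoluteValue.abs (Algebra.leftMulMatrix ω α a b) ≤ ((k * (B0+1) : ℕ):ℤ) * (T:ℤ) :=
          hentry
        have hd := Matrix.det_le hentry'
        rw [Fintype.card_fin, nsmul_eq_mul] at hd
        exact_mod_cast hd
      have hreal : (N:ℝ) ≤ E * (T:ℝ) ^ k := by
        have h3 : ((N:ℤ):ℝ) ≤ (((Nat.factorial k : ℤ) * (((k * (B0+1) : ℕ):ℤ) * (T:ℤ)) ^ k : ℤ) : ℝ) := by
          exact_mod_cast hle.trans hdet
        rw [hEdef]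
        push_cast at h3 ⊢
        calc (N:ℝ) ≤ (Nat.factorial k : ℝ) * (((k:ℝ) * ((B0:ℝ)+1)) * (T:ℝ)) ^ k := h3
          _ = (Nat.factorial k : ℝ) * ((k:ℝ) * ((B0:ℝ)+1)) ^ k * (T:ℝ) ^ k := by
              rw [mul_pow]; ring
      have hub : E * (T:ℝ) ^ k ≤ E * ((N:ℝ) ^ (1/(k:ℝ)) / D) ^ k := by
        apply mul_le_mul_of_nonneg_left _ hE0.le
        exact pow_le_pow_left₀ (by positivity) hTle k
      have heq : ((N:ℝ) ^ (1/(k:ℝ)) / D) ^ k = (N:ℝ) / (E+1) := by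
        rw [div_pow, ← Real.rpow_natCast ((N:ℝ) ^ (1/(k:ℝ))) k, ← Real.rpow_mul hNR.le,
          one_div_mul_cancel (ne_of_gt hkR), Real.rpow_one, hDk]
      have hfin : (N:ℝ) ≤ E * ((N:ℝ) / (E+1)) := by
        rw [← heq]; exact hreal.trans hub
      have h2 : E * ((N:ℝ) / (E+1)) < (N:ℝ) := by
        rw [mul_div_assoc', div_lt_iff₀ (by linarith)]
        nlinarith [hNR]
      exact absurd (hfin.trans_lt h2) (lt_irrefl _)
    funext i
    have := hd0 i
    rw [hddef, sub_eq_zero] at this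
    have : (v i : ℕ) = (w i : ℕ) := by exact_mod_cast this
    exact Fin.ext this
  -- range lower bound
  haveI : Finite ((Fin (k-1) → ZMod N) ⧸ ψ.ker) := Quotient.finite _
  haveI : Finite ψ.range :=
    Finite.of_equiv _ (QuotientAddGroup.quotientKerEquivRange ψ).toEquiv
  have hrange : (T+1) ^ (k-1) ≤ Nat.card ψ.range := by
    have hinj : Function.Injective (fun v : Fin (k-1) → Fin (T+1) =>
        (⟨ψ (fun i => ((v i : ℕ) : ZMod N)), ⟨_, rfl⟩⟩ : ψ.range)) := by
      intro v w h
      exact hbox v w (congrArg Subtype.val h)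
    calc (T+1) ^ (k-1) = Nat.card (Fin (k-1) → Fin (T+1)) := by
          simp [Nat.card_eq_fintype_card]
      _ ≤ Nat.card ψ.range := Nat.card_le_card_of_injective _ hinj
  -- final arithmetic
  have hRpos : 0 < Nat.card ψ.range := lt_of_lt_of_le (by positivity) hrange
  have hρ : rhoIdeal K k ω 𝔫 = (N:ℝ) / (Nat.card ψ.range : ℝ) := by
    unfold rhoIdeal
    rw [← hNdef, ← hιdef, hker, div_eq_div_iff (by positivity) (by positivity)]
    have hc : ((Nat.card ψ.ker : ℕ) : ℝ) * (Nat.card ψ.range : ℝ) = (N:ℝ) ^ (k-1) := by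
      rw [← Nat.cast_mul, mul_comm, ← hcards]
      push_cast
      ring
    rw [hc, show (N:ℝ)^(k-1) = (N:ℝ) * (N:ℝ)^(k-2) from by
      rw [hk21, pow_succ]; ring]
  rw [hρ]
  have hrangeR : (((T+1) ^ (k-1) : ℕ) : ℝ) ≤ (Nat.card ψ.range : ℝ) := by exact_mod_cast hrange
  have hlowpos : (0:ℝ) < ((N:ℝ) ^ (1/(k:ℝ)) / D) ^ (k-1) := by positivity
  have hTlow : ((N:ℝ) ^ (1/(k:ℝ)) / D) ^ (k-1) ≤ (((T+1) ^ (k-1) : ℕ) : ℝ) := by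
    push_cast
    exact pow_le_pow_left₀ (by positivity) (le_of_lt hTlt) _
  calc (N:ℝ) / (Nat.card ψ.range : ℝ)
      ≤ (N:ℝ) / ((N:ℝ) ^ (1/(k:ℝ)) / D) ^ (k-1) := by
        exact div_le_div_of_nonneg_left hNR.le hlowpos (hTlow.trans hrangeR)
    _ = D ^ (k-1) * (N:ℝ) ^ (1/(k:ℝ)) := by
        rw [div_pow]
        rw [← Real.rpow_natCast ((N:ℝ) ^ (1/(k:ℝ))) (k-1)]
        rw [← Real.rpow_mul hNR.le]
        rw [div_div_eq_mul_div, mul_comm (N:ℝ) (D ^ (k-1)), mul_div_assoc]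
        congr 1
        have hsub : (N:ℝ) ^ ((1:ℝ) - (1/(k:ℝ)) * ((k-1:ℕ):ℝ))
            = (N:ℝ) ^ (1:ℝ) / (N:ℝ) ^ ((1/(k:ℝ)) * ((k-1:ℕ):ℝ)) := Real.rpow_sub hNR _ _
        rw [Real.rpow_one] at hsub
        rw [← hsub]
        congr 1
        have hcast : ((k-1:ℕ):ℝ) = (k:ℝ) - 1 := by
          rw [Nat.cast_sub hk1, Nat.cast_one]
        rw [hcast]
        field_simp
        ring

end
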